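/- There exists a universal constant C > 0 such that for every δ ∈ {1,2}, every integer p ≥ 1 and every real s ≥ e·p: log ∫_{(0,∞)^p} 1[ t_1 + ⋯ + t_p < s ] · ∏_{i=1}^p ( 1 + |log t_i| )^δ dt_1 ⋯ dt_p ≤ p log( (s/p) · ( log(s/p) )^δ ) + C p. -/

import Mathlib

open MeasureTheory Real
open scoped BigOperators

open Set

lemma aux_sq_le (v : ℝ) (hv : 0 ≤ v) : (2 + v) ^ 2 ≤ 8 * Real.exp (v / 2) := by
  have h1 : (1 : ℝ) + v / 8 ≤ Real.exp (v / 8) := by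
    have := Real.add_one_le_exp (v / 8); linarith
  have h2 : Real.exp (v / 2) = Real.exp (v / 8) ^ 4 := by
    rw [← Real.exp_nat_mul]; push_cast; ring_nf
  have h3 : ((1 : ℝ) + v / 8) ^ 4 ≤ Real.exp (v / 8) ^ 4 :=
    pow_le_pow_left₀ (by linarith) h1 4
  rw [h2]
  nlinarith [sq_nonneg v, sq_nonneg (v - 4), mul_nonneg (mul_nonneg hv hv) hv,
    mul_nonneg (mul_nonneg (mul_nonneg hv hv) hv) hv, sq_nonneg (v*v - 4*v)]

noncomputable def h0 : ℝ → ℝ :=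
  fun x => Real.exp (-x) * x ^ ((1:ℝ)/2 - 1) + Real.exp (-x) * x ^ ((3:ℝ)/2 - 1)

lemma h0_int : IntegrableOn h0 (Ioi 0) :=
  (Real.GammaIntegral_convergent (by norm_num : (0:ℝ) < 1/2)).add
    (Real.GammaIntegral_convergent (by norm_num : (0:ℝ) < 3/2))

lemma h0_eq : ∫ x in Ioi 0, h0 x = Real.Gamma (1/2) + Real.Gamma (3/2) := by
  rw [show (∫ x in Ioi 0, h0 x) = (∫ x in Ioi 0, Real.exp (-x) * x ^ ((1:ℝ)/2 - 1))
      + ∫ x in Ioi 0, Real.exp (-x) * x ^ ((3:ℝ)/2 - 1) from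
    integral_add (Real.GammaIntegral_convergent (by norm_num)) (Real.GammaIntegral_convergent (by norm_num)),
    Real.Gamma_eq_integral (by norm_num : (0:ℝ) < 1/2),
    Real.Gamma_eq_integral (by norm_num : (0:ℝ) < 3/2)]

lemma h0_nonneg {x : ℝ} (hx : 0 < x) : 0 ≤ h0 x := by
  unfold h0; positivity

noncomputable def Kc : ℝ := 8 * Real.exp 1 * (Real.Gamma (1/2) + Real.Gamma (3/2))

lemma Kc_pos : 0 < Kc := by
  have g1 := Real.Gamma_pos_of_pos (by norm_num : (0:ℝ) < 1/2)
  have g2 := Real.Gamma_pos_of_pos (by norm_num : (0:ℝ) < 3/2)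
  have := Real.exp_pos 1
  unfold Kc; positivity

lemma one_dim_ptwise (δ : ℕ) (hδ : δ ≤ 2) {lam : ℝ} (hlam : Real.exp 1 ≤ lam)
    {t : ℝ} (ht : 0 < t) :
    (1 + |Real.log t|) ^ δ * Real.exp (1 - t / lam) ≤
      (Real.log lam) ^ δ * (8 * Real.exp 1) * h0 (lam⁻¹ * t) := by
  have hlam0 : 0 < lam := lt_of_lt_of_le (Real.exp_pos 1) hlam
  have hL : 1 ≤ Real.log lam := by
    rw [Real.le_log_iff_exp_le hlam0]; exact hlam
  set u : ℝ := lam⁻¹ * t with hu_def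
  have hu : 0 < u := by positivity
  have hlogu : Real.log u = -Real.log lam + Real.log t := by
    rw [hu_def, Real.log_mul (inv_ne_zero hlam0.ne') ht.ne', Real.log_inv]
  have step1 : 1 + |Real.log t| ≤ Real.log lam * (2 + |Real.log u|) := by
    have h1 : |Real.log t| ≤ Real.log lam + |Real.log u| := by
      have : Real.log t = Real.log lam + Real.log u := by rw [hlogu]; ring
      rw [this]
      calc |Real.log lam + Real.log u| ≤ |Real.log lam| + |Real.log u| := abs_add_le _ _
        _ = Real.log lam + |Real.log u| := by rw [abs_of_nonneg (by linarith)]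
    nlinarith [abs_nonneg (Real.log u)]
  have step2 : (1 + |Real.log t|) ^ δ ≤ (Real.log lam) ^ δ * (2 + |Real.log u|) ^ δ := by
    rw [← mul_pow]
    exact pow_le_pow_left₀ (by positivity) step1 δ
  have step3 : (2 + |Real.log u|) ^ δ ≤ (2 + |Real.log u|) ^ 2 :=
    pow_le_pow_right₀ (by have := abs_nonneg (Real.log u); linarith) hδ
  have step4 : (2 + |Real.log u|) ^ 2 ≤ 8 * Real.exp (|Real.log u| / 2) :=
    aux_sq_le _ (abs_nonneg _)
  have step5 : Real.exp (|Real.log u| / 2) ≤ u ^ ((1:ℝ)/2 - 1) + u ^ ((3:ℝ)/2 - 1) := by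
    have e1 : u ^ ((1:ℝ)/2 - 1) = Real.exp (-(Real.log u) / 2) := by
      rw [Real.rpow_def_of_pos hu]; ring_nf
    have e2 : u ^ ((3:ℝ)/2 - 1) = Real.exp (Real.log u / 2) := by
      rw [Real.rpow_def_of_pos hu]; ring_nf
    rcases abs_cases (Real.log u) with ⟨h, _⟩ | ⟨h, _⟩
    · rw [h, ← e2]; have := Real.exp_pos (-(Real.log u)/2); rw [← e1] at this; linarith
    · rw [h, show -Real.log u / 2 = -(Real.log u)/2 by ring, ← e1]
      have := Real.exp_pos (Real.log u / 2); rw [← e2] at this; linarith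
  have step6 : Real.exp (1 - t / lam) = Real.exp 1 * Real.exp (-u) := by
    rw [← Real.exp_add]; congr 1; rw [hu_def]; field_simp; ring
  have hLp : (0:ℝ) ≤ (Real.log lam) ^ δ := by positivity
  have hexp : (0:ℝ) < Real.exp (1 - t / lam) := Real.exp_pos _
  calc (1 + |Real.log t|) ^ δ * Real.exp (1 - t / lam)
      ≤ ((Real.log lam) ^ δ * (2 + |Real.log u|) ^ 2) * Real.exp (1 - t / lam) := by
        apply mul_le_mul_of_nonneg_right _ hexp.le
        exact step2.trans (mul_le_mul_of_nonneg_left step3 hLp)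
    _ ≤ ((Real.log lam) ^ δ * (8 * Real.exp (|Real.log u| / 2))) * Real.exp (1 - t / lam) := by
        apply mul_le_mul_of_nonneg_right _ hexp.le
        exact mul_le_mul_of_nonneg_left step4 hLp
    _ = (Real.log lam) ^ δ * (8 * Real.exp 1) * (Real.exp (|Real.log u| / 2) * Real.exp (-u)) := by
        rw [step6]; ring
    _ ≤ (Real.log lam) ^ δ * (8 * Real.exp 1) * ((u ^ ((1:ℝ)/2 - 1) + u ^ ((3:ℝ)/2 - 1)) * Real.exp (-u)) := by
        apply mul_le_mul_of_nonneg_left _ (by positivity)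
        exact mul_le_mul_of_nonneg_right step5 (Real.exp_pos _).le
    _ = (Real.log lam) ^ δ * (8 * Real.exp 1) * h0 u := by unfold h0; ring

lemma one_dim (δ : ℕ) (hδ : δ ≤ 2) {lam : ℝ} (hlam : Real.exp 1 ≤ lam) :
    IntegrableOn (fun t => (1 + |Real.log t|) ^ δ * Real.exp (1 - t / lam)) (Ioi 0) ∧
    ∫ t in Ioi 0, (1 + |Real.log t|) ^ δ * Real.exp (1 - t / lam) ≤
      lam * (Real.log lam) ^ δ * Kc := by
  have hlam0 : 0 < lam := lt_of_lt_of_le (Real.exp_pos 1) hlam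
  have hinv : 0 < lam⁻¹ := inv_pos.2 hlam0
  have hL0 : (0:ℝ) ≤ Real.log lam :=
    Real.log_nonneg (le_trans (by nlinarith [Real.add_one_le_exp (1:ℝ)]) hlam)
  have hcomp_int : IntegrableOn (fun t => h0 (lam⁻¹ * t)) (Ioi 0) := by
    have := (integrableOn_Ioi_comp_mul_left_iff h0 0 hinv).2 (by simpa using h0_int)
    simpa using this
  have hbd_int : IntegrableOn
      (fun t => (Real.log lam) ^ δ * (8 * Real.exp 1) * h0 (lam⁻¹ * t)) (Ioi 0) :=
    hcomp_int.const_mul _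
  have hmeas : Measurable (fun t : ℝ => (1 + |Real.log t|) ^ δ * Real.exp (1 - t / lam)) := by
    apply Measurable.mul
    · exact (measurable_const.add Real.measurable_log.abs).pow_const δ
    · exact Real.measurable_exp.comp (measurable_const.sub (measurable_id.div_const lam))
  have hint : IntegrableOn (fun t => (1 + |Real.log t|) ^ δ * Real.exp (1 - t / lam)) (Ioi 0) := by
    apply Integrable.mono hbd_int hmeas.aestronglyMeasurable
    filter_upwards [ae_restrict_mem measurableSet_Ioi] with t ht
    have ht' : (0:ℝ) < t := ht
    have h1 := one_dim_ptwise δ hδ hlam ht'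
    have h2 : (0:ℝ) ≤ h0 (lam⁻¹ * t) := h0_nonneg (by positivity)
    have ha : (0:ℝ) ≤ (1 + |Real.log t|) ^ δ * Real.exp (1 - t / lam) :=
      mul_nonneg (pow_nonneg (by positivity) δ) (Real.exp_pos _).le
    have hb : (0:ℝ) ≤ (Real.log lam) ^ δ * (8 * Real.exp 1) * h0 (lam⁻¹ * t) :=
      mul_nonneg (mul_nonneg (pow_nonneg hL0 δ) (by positivity)) h2
    rw [Real.norm_eq_abs, Real.norm_eq_abs, abs_of_nonneg ha, abs_of_nonneg hb]
    exact h1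
  refine ⟨hint, ?_⟩
  have hmono : ∫ t in Ioi 0, (1 + |Real.log t|) ^ δ * Real.exp (1 - t / lam) ≤
      ∫ t in Ioi 0, (Real.log lam) ^ δ * (8 * Real.exp 1) * h0 (lam⁻¹ * t) :=
    setIntegral_mono_on hint hbd_int measurableSet_Ioi
      (fun t ht => one_dim_ptwise δ hδ hlam ht)
  have hval : ∫ t in Ioi 0, (Real.log lam) ^ δ * (8 * Real.exp 1) * h0 (lam⁻¹ * t) =
      lam * (Real.log lam) ^ δ * Kc := by
    rw [MeasureTheory.integral_const_mul]
    rw [integral_comp_mul_left_Ioi h0 0 hinv]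
    simp only [mul_zero, smul_eq_mul, inv_inv]
    rw [h0_eq]
    unfold Kc; ring
  rw [hval] at hmono
  exact hmono

/-- Logarithmic Dirichlet integral estimate (Lemma 3.2, second estimate). -/
theorem statement12 :
    ∃ C : ℝ, 0 < C ∧
      ∀ δ : ℕ, (δ = 1 ∨ δ = 2) → ∀ p : ℕ, 1 ≤ p → ∀ s : ℝ, Real.exp 1 * p ≤ s →
        Real.log (∫ t in {t : Fin p → ℝ | (∀ i, 0 < t i) ∧ ∑ i, t i < s},
            ∏ i, (1 + |Real.log (t i)|) ^ δ) ≤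
          p * Real.log ((s / p) * (Real.log (s / p)) ^ δ) + C * p := by
  refine ⟨|Real.log Kc| + 1, by positivity, ?_⟩
  intro δ hδ p hp s hs
  have hδ2 : δ ≤ 2 := by rcases hδ with h | h <;> omega
  have hp0 : (0:ℝ) < p := by exact_mod_cast hp
  set lam : ℝ := s / p with hlam_def
  have hlam : Real.exp 1 ≤ lam := (le_div_iff₀ hp0).2 hs
  have hlam0 : 0 < lam := lt_of_lt_of_le (Real.exp_pos 1) hlam
  have hL : 1 ≤ Real.log lam := by rw [Real.le_log_iff_exp_le hlam0]; exact hlam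
  obtain ⟨hgint, hgbd⟩ := one_dim δ hδ2 hlam
  set g0 : ℝ → ℝ := fun t => (1 + |Real.log t|) ^ δ * Real.exp (1 - t / lam) with hg0_def
  set g : ℝ → ℝ := (Set.Ioi (0:ℝ)).indicator g0 with hg_def
  have hg_int : Integrable g := (integrable_indicator_iff measurableSet_Ioi).2 hgint
  have hg0_nonneg : ∀ t, 0 ≤ g0 t := fun t =>
    mul_nonneg (pow_nonneg (by positivity) δ) (Real.exp_pos _).le
  have hg_nonneg : ∀ t, 0 ≤ g t := fun t =>
    Set.indicator_nonneg (fun x _ => hg0_nonneg x) t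
  have hg_val : ∫ t, g t = ∫ t in Set.Ioi 0, g0 t := integral_indicator measurableSet_Ioi
  have hg_int_nonneg : 0 ≤ ∫ t, g t := integral_nonneg hg_nonneg
  set S := {t : Fin p → ℝ | (∀ i, 0 < t i) ∧ ∑ i, t i < s} with hS_def
  set F : (Fin p → ℝ) → ℝ := fun t => ∏ i, (1 + |Real.log (t i)|) ^ δ with hF_def
  set G : (Fin p → ℝ) → ℝ := fun t => ∏ i, g (t i) with hG_def
  have hF_nonneg : ∀ t, 0 ≤ F t := fun t =>
    Finset.prod_nonneg fun i _ => pow_nonneg (by positivity) δ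
  have hG_nonneg : ∀ t, 0 ≤ G t := fun t =>
    Finset.prod_nonneg fun i _ => hg_nonneg _
  have hGint : Integrable G := Integrable.fintype_prod (fun _ => hg_int)
  have hGeq : ∫ t, G t = (∫ t, g t) ^ p := by
    rw [hG_def]
    rw [MeasureTheory.integral_fintype_prod_volume_eq_pow (ι := Fin p) g]
    simp
  have hS_meas : MeasurableSet S := by
    have h1 : MeasurableSet {t : Fin p → ℝ | ∀ i, 0 < t i} := by
      have : {t : Fin p → ℝ | ∀ i, 0 < t i} = ⋂ i, {t | 0 < t i} := by ext; simp
      rw [this]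
      exact MeasurableSet.iInter fun i =>
        measurableSet_lt measurable_const (measurable_pi_apply i)
    have h2 : MeasurableSet {t : Fin p → ℝ | ∑ i, t i < s} :=
      measurableSet_lt (Finset.measurable_sum _ fun i _ => measurable_pi_apply i)
        measurable_const
    have : S = {t : Fin p → ℝ | ∀ i, 0 < t i} ∩ {t : Fin p → ℝ | ∑ i, t i < s} := by
      ext t; simp [hS_def, Set.mem_setOf_eq, and_comm]
    rw [this]; exact h1.inter h2
  have hFG : ∀ t ∈ S, F t ≤ G t := by
    intro t ht
    obtain ⟨htpos, htsum⟩ := ht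
    have hgt : G t = ∏ i, g0 (t i) :=
      Finset.prod_congr rfl fun i _ => by
        rw [hg_def]; exact Set.indicator_of_mem (htpos i) g0
    have hsplit : (∏ i, g0 (t i)) = F t * Real.exp (∑ i, (1 - t i / lam)) := by
      rw [hg0_def, hF_def, Real.exp_sum, ← Finset.prod_mul_distrib]
    have hsum : 0 ≤ ∑ i, (1 - t i / lam) := by
      have h1 : (∑ i, (1 - t i / lam)) = p - (∑ i, t i) / lam := by
        rw [Finset.sum_sub_distrib, Finset.sum_const, ← Finset.sum_div]
        simp
      have h2 : (∑ i, t i) / lam ≤ p := by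
        rw [div_le_iff₀ hlam0]
        have : (p:ℝ) * lam = s := by rw [hlam_def]; field_simp
        linarith
      linarith
    have hE : 1 ≤ Real.exp (∑ i, (1 - t i / lam)) := Real.one_le_exp hsum
    rw [hgt, hsplit]
    exact le_mul_of_one_le_right (hF_nonneg t) hE
  have hF_meas : Measurable F := by
    apply Finset.measurable_prod
    intro i _
    exact ((measurable_const.add (Real.measurable_log.comp (measurable_pi_apply i)).abs).pow_const δ)
  have hFint : IntegrableOn F S := by
    apply Integrable.mono hGint.integrableOn hF_meas.aestronglyMeasurable
    filter_upwards [ae_restrict_mem hS_meas] with t ht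
    rw [Real.norm_eq_abs, Real.norm_eq_abs, abs_of_nonneg (hF_nonneg t), abs_of_nonneg (hG_nonneg t)]
    exact hFG t ht
  have hchain : ∫ t in S, F t ≤ (lam * (Real.log lam) ^ δ * Kc) ^ p := by
    calc ∫ t in S, F t ≤ ∫ t in S, G t :=
          setIntegral_mono_on hFint hGint.integrableOn hS_meas hFG
      _ ≤ ∫ t, G t := setIntegral_le_integral hGint (ae_of_all _ hG_nonneg)
      _ = (∫ t, g t) ^ p := hGeq
      _ ≤ (lam * (Real.log lam) ^ δ * Kc) ^ p := by
          apply pow_le_pow_left₀ hg_int_nonneg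
          rw [hg_val]; exact hgbd
  have hInonneg : 0 ≤ ∫ t in S, F t := setIntegral_nonneg hS_meas fun t _ => hF_nonneg t
  have hB1 : (1:ℝ) ≤ lam * (Real.log lam) ^ δ := by
    have h1 : (1:ℝ) ≤ lam := le_trans (by nlinarith [Real.add_one_le_exp (1:ℝ)]) hlam
    have h2 : (1:ℝ) ≤ (Real.log lam) ^ δ := one_le_pow₀ hL
    nlinarith
  have hlogC : Real.log Kc ≤ |Real.log Kc| := le_abs_self _
  rcases eq_or_lt_of_le hInonneg with hzero | hpos
  · rw [← hzero, Real.log_zero]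
    have h1 : 0 ≤ Real.log (lam * (Real.log lam) ^ δ) := Real.log_nonneg hB1
    have h2 : (0:ℝ) ≤ (p:ℝ) := hp0.le
    positivity
  · calc Real.log (∫ t in S, F t)
        ≤ Real.log ((lam * (Real.log lam) ^ δ * Kc) ^ p) := Real.log_le_log hpos hchain
      _ = p * Real.log (lam * (Real.log lam) ^ δ * Kc) := Real.log_pow _ _
      _ = p * (Real.log (lam * (Real.log lam) ^ δ) + Real.log Kc) := by
          rw [Real.log_mul (by positivity) Kc_pos.ne']
      _ ≤ p * Real.log (lam * (Real.log lam) ^ δ) + (|Real.log Kc| + 1) * p := by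
          have : (p:ℝ) * Real.log Kc ≤ (|Real.log Kc| + 1) * p := by
            rw [mul_comm ((|Real.log Kc| + 1)) (p:ℝ)]
            apply mul_le_mul_of_nonneg_left _ hp0.le
            linarith
          linarith [mul_add (p:ℝ) (Real.log (lam * (Real.log lam) ^ δ)) (Real.log Kc)]
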